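/- arXiv:2406.14386 — 2 statements merged into one kernel-verified Lean document; each statement's English description precedes it below -/
import Mathlib

section
/- Let d, M be positive integers with d ≤ M, c_M := Σ_{i=1}^M 1/i the harmonic number. Then Σ_{i=1}^{⌊M/d⌋} (1/i) / c_M ≥ (log M − log d)/log M, where log denotes the natural logarithm and M > 1. -/
open Classical

open Matrix
open scoped ComplexOrder

noncomputable def msqrt {n : Type*} [Fintype n] [DecidableEq n] (A : Matrix n n ℂ) :
    Matrix n n ℂ :=
  if h : A.PosSemidef then
    (h.1.eigenvectorUnitary : Matrix n n ℂ) * diagonal ((↑) ∘ Real.sqrt ∘ h.1.eigenvalues) *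
      (star h.1.eigenvectorUnitary : Matrix n n ℂ)
  else 0

/-- Uhlmann fidelity F_U(ρ,σ) = (Tr √(√σ ρ √σ))². -/
noncomputable def uFid {n : Type*} [Fintype n] [DecidableEq n] (ρ σ : Matrix n n ℂ) : ℝ :=
  ((msqrt (msqrt σ * ρ * msqrt σ)).trace.re) ^ 2

/-- Purified distance. -/
noncomputable def pDist {n : Type*} [Fintype n] [DecidableEq n] (ρ σ : Matrix n n ℂ) : ℝ :=
  Real.sqrt (1 - uFid ρ σ)

def IsDensity {n : Type*} [Fintype n] [DecidableEq n] (ρ : Matrix n n ℂ) : Prop :=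
  ρ.PosSemidef ∧ ρ.trace = 1

noncomputable def Dmax {n : Type*} [Fintype n] [DecidableEq n] (ρ σ : Matrix n n ℂ) : ℝ :=
  sInf {l : ℝ | (((2 : ℝ) ^ l) • σ - ρ).PosSemidef}

private lemma expAux {t : ℝ} (h0 : 0 ≤ t) (h1 : t ≤ 1) : Real.exp t * (2 - t) ≤ 2 + t := by
  have h := Real.exp_bound' h0 h1 (n := 3) (by norm_num)
  simp only [Finset.sum_range_succ, Finset.sum_range_zero] at h
  norm_num [Nat.factorial] at h
  nlinarith [pow_nonneg h0 3, pow_nonneg h0 4]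

private lemma invLeLog {i : ℕ} (hi : 1 ≤ i) :
    (1:ℝ)/i ≤ Real.log (2*(i:ℝ)+1) - Real.log (2*(i:ℝ)-1) := by
  have hi' : (1:ℝ) ≤ (i:ℝ) := by exact_mod_cast hi
  have hipos : (0:ℝ) < i := by linarith
  have h0 : 0 ≤ (1:ℝ)/i := by positivity
  have h1 : (1:ℝ)/i ≤ 1 := by rw [div_le_one hipos]; exact hi'
  have h2 := expAux h0 h1
  have hden : (0:ℝ) < 2*(i:ℝ)-1 := by linarith
  have hnum : (0:ℝ) < 2*(i:ℝ)+1 := by linarith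
  have hexp : Real.exp ((1:ℝ)/i) ≤ (2*(i:ℝ)+1)/(2*(i:ℝ)-1) := by
    rw [le_div_iff₀ hden]
    have e1 : (2*(i:ℝ)-1) = (2 - 1/i) * i := by field_simp
    have e2 : (2*(i:ℝ)+1) = (2 + 1/i) * i := by field_simp
    rw [e1, e2, ← mul_assoc]
    exact mul_le_mul_of_nonneg_right h2 hipos.le
  have hlog := (Real.le_log_iff_exp_le (by positivity)).2 hexp
  rwa [Real.log_div hnum.ne' hden.ne'] at hlog

private lemma sumLow (k M : ℕ) (h : k ≤ M) :
    Real.log ((M:ℝ)+1) - Real.log ((k:ℝ)+1) ≤ ∑ i ∈ Finset.Icc (k+1) M, (1:ℝ)/i := by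
  induction M, h using Nat.le_induction with
  | base => simp [Finset.Icc_eq_empty (by omega : ¬ k+1 ≤ k)]
  | succ n hn ih =>
    rw [Finset.sum_Icc_succ_top (by omega : k+1 ≤ n+1)]
    have hp : (0:ℝ) < (n:ℝ)+1 := by positivity
    have hterm : Real.log ((n:ℝ)+1+1) - Real.log ((n:ℝ)+1) ≤ 1/((n:ℝ)+1) := by
      have h2 := Real.log_le_sub_one_of_pos (x := ((n:ℝ)+1+1)/((n:ℝ)+1)) (by positivity)
      rw [Real.log_div (by positivity) hp.ne'] at h2
      have h3 : ((n:ℝ)+1+1)/((n:ℝ)+1) - 1 = 1/((n:ℝ)+1) := by field_simp; ring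
      linarith
    push_cast
    linarith

private lemma sumHigh (k M : ℕ) (h : k ≤ M) :
    ∑ i ∈ Finset.Icc (k+1) M, (1:ℝ)/i ≤ Real.log (2*(M:ℝ)+1) - Real.log (2*(k:ℝ)+1) := by
  induction M, h using Nat.le_induction with
  | base => simp [Finset.Icc_eq_empty (by omega : ¬ k+1 ≤ k)]
  | succ n hn ih =>
    rw [Finset.sum_Icc_succ_top (by omega : k+1 ≤ n+1)]
    have hterm := invLeLog (i := n+1) (by omega)
    push_cast at hterm ⊢
    have e1 : 2*((n:ℝ)+1)-1 = 2*(n:ℝ)+1 := by ring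
    rw [e1] at hterm
    linarith

private lemma sumSplit (k M : ℕ) (h : k ≤ M) :
    ∑ i ∈ Finset.Icc 1 M, (1:ℝ)/i
      = (∑ i ∈ Finset.Icc 1 k, (1:ℝ)/i) + ∑ i ∈ Finset.Icc (k+1) M, (1:ℝ)/i := by
  have e0 : Finset.Icc 1 M = Finset.Ioc 0 M := rfl
  have e1 : Finset.Icc 1 k = Finset.Ioc 0 k := rfl
  have e2 : Finset.Icc (k+1) M = Finset.Ioc k M := Finset.Icc_add_one_left_eq_Ioc k M
  rw [e0, e1, e2, Finset.sum_Ioc_consecutive _ (Nat.zero_le k) h]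

private lemma natPow3 (q : ℕ) (hq : 2 ≤ q) : (q+1)^2 ≤ 3^q := by
  induction q, hq using Nat.le_induction with
  | base => norm_num
  | succ n hn ih =>
    have h1 : (n+1+1)^2 ≤ 3*(n+1)^2 := by nlinarith
    calc (n+1+1)^2 ≤ 3*(n+1)^2 := h1
      _ ≤ 3*3^n := Nat.mul_le_mul_left _ ih
      _ = 3^(n+1) := by ring

private lemma natPow5 (M : ℕ) (hM : 5 ≤ M) : M^5 ≤ 5^M := by
  induction M, hM using Nat.le_induction with
  | base => norm_num
  | succ n hn ih =>
    have h1 : (n+1)^5 ≤ 5*n^5 := by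
      have h2 : 5*(n+1) ≤ 6*n := by omega
      have h3 : (5*(n+1))^5 ≤ (6*n)^5 := Nat.pow_le_pow_left h2 5
      have h6 : 3125*((n+1)^5) ≤ 3125*(5*n^5) := by
        calc 3125*((n+1)^5) = (5*(n+1))^5 := by ring
          _ ≤ (6*n)^5 := h3
          _ = 7776*n^5 := by ring
          _ ≤ 15625*n^5 := Nat.mul_le_mul_right _ (by norm_num)
          _ = 3125*(5*n^5) := by ring
      exact Nat.le_of_mul_le_mul_left h6 (by norm_num)
    calc (n+1)^5 ≤ 5*n^5 := h1
      _ ≤ 5*5^n := Nat.mul_le_mul_left _ ih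
      _ = 5^(n+1) := by ring

private lemma log3_le : Real.log 3 ≤ 11/10 := by
  rw [Real.log_le_iff_le_exp (by norm_num)]
  have h11 : Real.exp (11:ℝ) ≥ (3:ℝ)^10 := by
    calc Real.exp (11:ℝ) = (Real.exp 1)^11 := by
          rw [← Real.exp_nat_mul]; norm_num
      _ ≥ 2.7182818283^11 := by
          apply pow_le_pow_left₀ (by norm_num) Real.exp_one_gt_d9.le
      _ ≥ (3:ℝ)^10 := by norm_num
  have h : (3:ℝ)^10 ≤ (Real.exp (11/10))^10 := by
    rw [← Real.exp_nat_mul, show ((10:ℕ):ℝ)*(11/10) = 11 by norm_num]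
    exact h11
  exact le_of_pow_le_pow_left₀ (by norm_num) (Real.exp_pos _).le h

private lemma log5_le : Real.log 5 ≤ (137/59) * Real.log 2 := by
  have h : (5:ℝ)^59 ≤ 2^137 := by norm_num
  have h2 := Real.log_le_log (by positivity) h
  rw [Real.log_pow, Real.log_pow] at h2
  push_cast at h2
  linarith

private lemma log10_ge : (23/10:ℝ) ≤ Real.log 10 := by
  rw [Real.le_log_iff_exp_le (by norm_num)]
  have h23 : Real.exp (23:ℝ) ≤ (10:ℝ)^10 := by
    calc Real.exp (23:ℝ) = (Real.exp 1)^23 := by rw [← Real.exp_nat_mul]; norm_num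
      _ ≤ 2.7182818286^23 := by
          apply pow_le_pow_left₀ (Real.exp_pos _).le Real.exp_one_lt_d9.le
      _ ≤ (10:ℝ)^10 := by norm_num
  have h : (Real.exp (23/10))^10 ≤ (10:ℝ)^10 := by
    rw [← Real.exp_nat_mul, show ((10:ℕ):ℝ)*(23/10) = 23 by norm_num]
    exact h23
  exact le_of_pow_le_pow_left₀ (by norm_num) (by norm_num) h

private lemma numIVb : Real.log 5 / 5 ≤ (25/12 - Real.log 5) * Real.log 2 := by
  have h5 := log5_le
  have hl1 := Real.log_two_gt_d9
  have hl2 := Real.log_two_lt_d9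
  have h50 : 0 < Real.log 5 := Real.log_pos (by norm_num)
  nlinarith [mul_nonneg (sub_nonneg.2 h5) (Real.log_nonneg (by norm_num : (1:ℝ) ≤ 2))]

private lemma smallStep {b' c lM ld : ℝ} (hb : b' ≤ c) (hsub : 0 ≤ lM - ld)
    (hpw : (c-1)*lM ≤ c*ld) : (lM - ld) * b' ≤ lM := by
  nlinarith [mul_le_mul_of_nonneg_left hb hsub]

private lemma assembleStep {a s b lM ld c e : ℝ} (hsplit : b = a + s) (hs : s ≤ ld + e)
    (hb : lM + c ≤ b) (hld : 0 ≤ ld) (hlM : 0 ≤ lM) (hkey : e * lM ≤ c * ld) :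
    (lM - ld) * b ≤ a * lM := by
  nlinarith [mul_le_mul_of_nonneg_right hs hlM, mul_le_mul_of_nonneg_right hb hld]

private lemma keyIVa {lM L T Q : ℝ} (hQ : 2 ≤ Q) (hTL : T ≤ L) (hT0 : 0 < T)
    (hT1 : T ≤ 11/10) (hlM : lM ≤ L + (Q/2)*T) : (1/(2*Q+1))*lM ≤ (3/2 - T)*L := by
  have hQpos : (0:ℝ) < 2*Q+1 := by linarith
  have c3 : (0:ℝ) ≤ 5/2 - 2*T := by linarith
  have c1 : (0:ℝ) ≤ (3/2 - T)*(2*Q+1) - 1 - Q/2 := by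
    nlinarith [mul_nonneg (by linarith : (0:ℝ) ≤ Q - 2) c3]
  have c2 : (0:ℝ) ≤ (3/2 - T)*(2*Q+1) - 1 := by linarith
  have hL : lM ≤ (3/2 - T)*L*(2*Q+1) := by
    nlinarith [mul_nonneg (by linarith : (0:ℝ) ≤ L - T) c2, mul_nonneg hT0.le c1]
  rw [one_div, ← div_eq_inv_mul, div_le_iff₀ hQpos]
  linarith

private lemma keyIVb {lM mR Q : ℝ} (hm : mR ≤ 2*Q+1) (hm0 : 0 < mR)
    (hlM5 : 5*lM ≤ mR*Real.log 5) (hlM0 : 0 ≤ lM) :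
    (1/(2*Q+1))*lM ≤ (25/12 - Real.log 5)*Real.log 2 := by
  have hQpos : (0:ℝ) < 2*Q+1 := by linarith
  have h1 : (1/(2*Q+1))*lM ≤ (1/mR)*lM := by
    apply mul_le_mul_of_nonneg_right _ hlM0
    exact one_div_le_one_div_of_le hm0 hm
  have h2 : (1/mR)*lM ≤ Real.log 5/5 := by
    rw [one_div, ← div_eq_inv_mul, div_le_div_iff₀ hm0 (by norm_num)]
    linarith
  exact le_trans h1 (le_trans h2 numIVb)

set_option maxHeartbeats 2000000 in
theorem harmonic_ratio_bound (d M : ℕ) (hd : 1 ≤ d) (hdM : d ≤ M) (hM : 1 < M) :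
    (∑ i ∈ Finset.Icc 1 (M / d), (1 : ℝ) / i) / (∑ i ∈ Finset.Icc 1 M, (1 : ℝ) / i)
      ≥ (Real.log M - Real.log d) / Real.log M := by
  have hd0 : 0 < d := hd
  have hq1 : 1 ≤ M / d := (Nat.one_le_div_iff hd0).2 hdM
  have hqM : M / d ≤ M := Nat.div_le_self M d
  have hMR : (1:ℝ) < (M:ℝ) := by exact_mod_cast hM
  have hM0 : (0:ℝ) < (M:ℝ) := by linarith
  have hlogM : 0 < Real.log M := Real.log_pos hMR
  have hbpos : 0 < ∑ i ∈ Finset.Icc 1 M, (1:ℝ)/i := by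
    apply Finset.sum_pos
    · intro i hi
      have h1 : 1 ≤ i := (Finset.mem_Icc.1 hi).1
      have h2 : (0:ℝ) < i := by exact_mod_cast h1
      positivity
    · exact ⟨1, Finset.mem_Icc.2 ⟨le_refl 1, by omega⟩⟩
  rw [ge_iff_le, div_le_div_iff₀ hlogM hbpos]
  rcases eq_or_lt_of_le hd with hd1 | hd2
  · -- d = 1
    subst hd1
    simp only [Nat.div_one, Nat.cast_one, Real.log_one, sub_zero]
    exact le_of_eq (mul_comm _ _)
  have hd2' : 2 ≤ d := hd2
  have hdR : (2:ℝ) ≤ (d:ℝ) := by exact_mod_cast hd2'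
  have hd0R : (0:ℝ) < d := by linarith
  have hlogd0 : 0 ≤ Real.log d := Real.log_nonneg (by linarith)
  have hldm : Real.log d ≤ Real.log M := Real.log_le_log (by linarith) (by exact_mod_cast hdM)
  have hMlt : M < d * (M/d) + d := by
    have h2 := Nat.div_add_mod M d
    have h3 := Nat.mod_lt M hd0
    linarith
  have hMltR : (M:ℝ) + 1 ≤ (d:ℝ) * ((M/d : ℕ):ℝ) + d := by exact_mod_cast hMlt
  rcases eq_or_lt_of_le hq1 with hq1' | hq2
  · -- q = 1
    have ha1 : (∑ i ∈ Finset.Icc 1 (M/d), (1:ℝ)/i) = 1 := by rw [← hq1']; simp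
    rw [ha1, one_mul]
    have hM2d : M < 2*d := by
      have h4 : d * (M/d) = d * 1 := by rw [← hq1']
      omega
    have hlog2d : Real.log M ≤ Real.log 2 + Real.log d := by
      have h1 : (M:ℝ) ≤ 2*(d:ℝ) := by exact_mod_cast hM2d.le
      calc Real.log M ≤ Real.log (2*(d:ℝ)) := Real.log_le_log hM0 h1
        _ = Real.log 2 + Real.log d := Real.log_mul (by norm_num) (by positivity)
    by_cases hM10 : 10 ≤ M
    · -- q = 1, M ≥ 10
      have hsplit1 := sumSplit 1 M (by omega)
      have hhigh := sumHigh 1 M (by omega)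
      have h1e : (∑ i ∈ Finset.Icc (1:ℕ) 1, (1:ℝ)/i) = 1 := by simp
      have h2 : Real.log (2*(M:ℝ)+1) ≤ Real.log (M:ℝ) + Real.log 3 := by
        have h3 : 2*(M:ℝ)+1 ≤ (M:ℝ)*3 := by linarith
        calc Real.log (2*(M:ℝ)+1) ≤ Real.log ((M:ℝ)*3) := Real.log_le_log (by linarith) h3
          _ = Real.log (M:ℝ) + Real.log 3 := Real.log_mul hM0.ne' (by norm_num)
      have h4 : Real.log (2*((1:ℕ):ℝ)+1) = Real.log 3 := by norm_num
      rw [h4] at hhigh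
      have hb_up : (∑ i ∈ Finset.Icc 1 M, (1:ℝ)/i) ≤ 1 + Real.log M := by
        rw [hsplit1, h1e]
        linarith
      have hlogM10 : (23/10:ℝ) ≤ Real.log M := by
        refine le_trans log10_ge (Real.log_le_log (by norm_num) ?_)
        exact_mod_cast hM10
      have hbd : Real.log M - Real.log d ≤ Real.log 2 := by linarith
      have hl2 := Real.log_two_lt_d9
      have hl2' := Real.log_two_gt_d9
      have hstep : (Real.log M - Real.log d) * (∑ i ∈ Finset.Icc 1 M, (1:ℝ)/i)
          ≤ Real.log 2 * (1 + Real.log M) := by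
        apply mul_le_mul hbd hb_up hbpos.le (by linarith)
      nlinarith [mul_le_mul_of_nonneg_right hl2.le hlogM.le]
    · -- q = 1, M ≤ 9
      push_neg at hM10
      have hcase : (M = 3 ∧ d = 2) ∨ M^2 ≤ d^3 := by
        interval_cases M <;> interval_cases d <;> omega
      rcases hcase with ⟨hM3, hd2e⟩ | hcube
      · subst hM3; subst hd2e
        have hb : (∑ i ∈ Finset.Icc (1:ℕ) 3, (1:ℝ)/i) = 11/6 := by
          rw [show Finset.Icc (1:ℕ) 3 = {1,2,3} from rfl]; norm_num
        have hpw : (5:ℝ)*Real.log 3 ≤ 11*Real.log 2 := by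
          have h : (3:ℝ)^5 ≤ 2^11 := by norm_num
          have h2 := Real.log_le_log (by positivity) h
          rw [Real.log_pow, Real.log_pow] at h2
          push_cast at h2
          linarith
        push_cast
        have hsub : (0:ℝ) ≤ Real.log 3 - Real.log 2 := by
          have := Real.log_le_log (by norm_num : (0:ℝ) < 2) (by norm_num : (2:ℝ) ≤ 3)
          linarith
        exact smallStep hb.le hsub (by linarith)
      · have hb9 : (∑ i ∈ Finset.Icc 1 M, (1:ℝ)/i) ≤ ∑ i ∈ Finset.Icc (1:ℕ) 9, (1:ℝ)/i := by
          apply Finset.sum_le_sum_of_subset_of_nonneg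
          · exact Finset.Icc_subset_Icc_right (by omega)
          · intro i _ _
            positivity
        have hb3 : (∑ i ∈ Finset.Icc 1 M, (1:ℝ)/i) ≤ 3 := by
          have h9 : (∑ i ∈ Finset.Icc (1:ℕ) 9, (1:ℝ)/i) = 7129/2520 := by
            rw [show Finset.Icc (1:ℕ) 9 = {1,2,3,4,5,6,7,8,9} from rfl]; norm_num
          rw [h9] at hb9
          linarith
        have hpw : 2*Real.log M ≤ 3*Real.log d := by
          have hc : ((M:ℝ))^2 ≤ ((d:ℝ))^3 := by exact_mod_cast hcube
          have h2 := Real.log_le_log (by positivity) hc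
          rw [Real.log_pow, Real.log_pow] at h2
          push_cast at h2
          linarith
        exact smallStep hb3 (by linarith) (by linarith)
  · -- q ≥ 2
    have hq2' : 2 ≤ M / d := hq2
    have hqR2 : (2:ℝ) ≤ ((M/d : ℕ):ℝ) := by exact_mod_cast hq2'
    have hM4 : 4 ≤ M := by
      have h1 : 2*2 ≤ (M/d)*d := Nat.mul_le_mul hq2' hd2'
      have h2 := Nat.div_mul_le_self M d
      omega
    have hsplit : (∑ i ∈ Finset.Icc 1 M, (1:ℝ)/i)
        = (∑ i ∈ Finset.Icc 1 (M/d), (1:ℝ)/i) + ∑ i ∈ Finset.Icc (M/d+1) M, (1:ℝ)/i :=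
      sumSplit (M/d) M hqM
    have hs : (∑ i ∈ Finset.Icc (M/d+1) M, (1:ℝ)/i)
        ≤ Real.log d + 1/(2*((M/d : ℕ):ℝ)+1) := by
      have h1 := sumHigh (M/d) M hqM
      have h2 : Real.log (2*(M:ℝ)+1)
          ≤ Real.log d + Real.log (2*((M/d : ℕ):ℝ)+2) := by
        have h3 : 2*(M:ℝ)+1 ≤ (d:ℝ)*(2*((M/d : ℕ):ℝ)+2) := by nlinarith
        calc Real.log (2*(M:ℝ)+1) ≤ Real.log ((d:ℝ)*(2*((M/d : ℕ):ℝ)+2)) :=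
              Real.log_le_log (by linarith) h3
          _ = _ := Real.log_mul hd0R.ne' (by positivity)
      have h4 : Real.log (2*((M/d : ℕ):ℝ)+2) - Real.log (2*((M/d : ℕ):ℝ)+1)
          ≤ 1/(2*((M/d : ℕ):ℝ)+1) := by
        have hqp : (0:ℝ) < 2*((M/d : ℕ):ℝ)+1 := by linarith
        have h5 := Real.log_le_sub_one_of_pos
          (x := (2*((M/d : ℕ):ℝ)+2)/(2*((M/d : ℕ):ℝ)+1)) (by positivity)
        rw [Real.log_div (by positivity) hqp.ne'] at h5
        have h6 : (2*((M/d : ℕ):ℝ)+2)/(2*((M/d : ℕ):ℝ)+1) - 1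
            = 1/(2*((M/d : ℕ):ℝ)+1) := by
          field_simp
          ring
        linarith
      linarith
    rcases lt_or_ge d 3 with hd3 | hd3
    · -- d = 2
      have hde : d = 2 := by omega
      subst hde
      by_cases hM5 : 5 ≤ M
      · -- d = 2, M ≥ 5
        have hb_low : Real.log M + (25/12 - Real.log 5)
            ≤ ∑ i ∈ Finset.Icc 1 M, (1:ℝ)/i := by
          have h1 := sumSplit 4 M (by omega)
          have h2 := sumLow 4 M (by omega)
          have h3 : (∑ i ∈ Finset.Icc (1:ℕ) 4, (1:ℝ)/i) = 25/12 := by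
            rw [show Finset.Icc (1:ℕ) 4 = {1,2,3,4} from rfl]; norm_num
          have h5 : Real.log (((4:ℕ):ℝ)+1) = Real.log 5 := by norm_num
          rw [h5] at h2
          have h6 : Real.log (M:ℝ) ≤ Real.log ((M:ℝ)+1) :=
            Real.log_le_log hM0 (by linarith)
          linarith
        have hm : (M:ℝ) ≤ 2*((M/2 : ℕ):ℝ)+1 := by
          have h7 : M ≤ 2*(M/2)+1 := by omega
          exact_mod_cast h7
        have hlM5 : 5*Real.log M ≤ (M:ℝ)*Real.log 5 := by
          have h1 := natPow5 M hM5
          have h2 : ((M:ℝ))^5 ≤ (5:ℝ)^M := by exact_mod_cast h1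
          have h3 := Real.log_le_log (by positivity) h2
          rw [Real.log_pow, Real.log_pow] at h3
          push_cast at h3
          linarith
        push_cast at hs hlogd0 ⊢
        refine assembleStep hsplit hs hb_low hlogd0 hlogM.le ?_
        exact keyIVb hm hM0 hlM5 hlogM.le
      · -- d = 2, M = 4
        have hM4e : M = 4 := by omega
        subst hM4e
        have e42 : (4:ℕ)/2 = 2 := rfl
        rw [e42]
        have hb : (∑ i ∈ Finset.Icc (1:ℕ) 4, (1:ℝ)/i) = 25/12 := by
          rw [show Finset.Icc (1:ℕ) 4 = {1,2,3,4} from rfl]; norm_num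
        have ha : (∑ i ∈ Finset.Icc (1:ℕ) 2, (1:ℝ)/i) = 3/2 := by
          rw [show Finset.Icc (1:ℕ) 2 = {1,2} from rfl]; norm_num
        rw [hb, ha]
        push_cast
        have hlog4 : Real.log (4:ℝ) = 2*Real.log 2 := by
          rw [show (4:ℝ) = (2:ℝ)^2 by norm_num, Real.log_pow]
          push_cast; ring
        rw [hlog4]
        have hl2 : 0 < Real.log 2 := Real.log_pos (by norm_num)
        nlinarith
    · -- d ≥ 3
      have hd3R : (3:ℝ) ≤ (d:ℝ) := by exact_mod_cast hd3
      have hb_low : Real.log M + (3/2 - Real.log 3)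
          ≤ ∑ i ∈ Finset.Icc 1 M, (1:ℝ)/i := by
        have h1 := sumSplit 2 M (by omega)
        have h2 := sumLow 2 M (by omega)
        have h3 : (∑ i ∈ Finset.Icc (1:ℕ) 2, (1:ℝ)/i) = 3/2 := by
          rw [show Finset.Icc (1:ℕ) 2 = {1,2} from rfl]; norm_num
        have h5 : Real.log (((2:ℕ):ℝ)+1) = Real.log 3 := by norm_num
        rw [h5] at h2
        have h6 : Real.log (M:ℝ) ≤ Real.log ((M:ℝ)+1) :=
          Real.log_le_log hM0 (by linarith)
        linarith
      have hlogq : Real.log (((M/d : ℕ):ℝ)+1) ≤ (((M/d : ℕ):ℝ)/2)*Real.log 3 := by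
        have h1 := natPow3 (M/d) hq2'
        have h2 : (((M/d : ℕ):ℝ)+1)^2 ≤ (3:ℝ)^(M/d) := by exact_mod_cast h1
        have h3 := Real.log_le_log (by positivity) h2
        rw [Real.log_pow, Real.log_pow] at h3
        push_cast at h3
        linarith
      have hlMd : Real.log M ≤ Real.log d + Real.log (((M/d : ℕ):ℝ)+1) := by
        have h1 : (M:ℝ) ≤ (d:ℝ)*(((M/d : ℕ):ℝ)+1) := by nlinarith
        calc Real.log M ≤ Real.log ((d:ℝ)*(((M/d : ℕ):ℝ)+1)) :=
              Real.log_le_log hM0 h1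
          _ = _ := Real.log_mul hd0R.ne' (by positivity)
      have hTd : Real.log 3 ≤ Real.log d := Real.log_le_log (by norm_num) hd3R
      refine assembleStep hsplit hs hb_low hlogd0 hlogM.le ?_
      exact keyIVa hqR2 hTd (Real.log_pos (by norm_num)) log3_le (by linarith)
end

section
/- Let d ≤ M be positive integers with M > 1, c_M := Σ_{j=1}^M 1/j, and define coefficients ω_{ij} := 1/√(⌈((i−1)M+j)/d⌉ · d · c_M) for 1 ≤ i ≤ d, 1 ≤ j ≤ M. Then the inner product Σ_{j=1}^M ω_{1j}/√(j c_M) between the vector |11⟩⊗|τ^E⟩ and |ω⟩ = Σ_{i,j} ω_{ij}|ii⟩|jj⟩ is at least (log M − log d)/log M. -/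
open Classical

open Matrix
open scoped ComplexOrder

lemma log_step (n : ℕ) (hn : 1 ≤ n) :
    Real.log (n + 1) - Real.log n ≤ 1 / (n : ℝ) := by
  have hn0 : (0:ℝ) < n := by exact_mod_cast hn
  rw [← Real.log_div (by positivity) (by positivity)]
  have h := Real.log_le_sub_one_of_pos (x := ((n:ℝ)+1)/(n:ℝ)) (by positivity)
  have h2 : ((n:ℝ)+1)/(n:ℝ) - 1 = 1/(n:ℝ) := by field_simp; ring
  linarith

lemma log_step' (n : ℕ) :
    Real.log (n + 1 + 1) - Real.log (n + 1) ≤ 1 / ((n : ℝ) + 1) := by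
  have := log_step (n+1) (by omega)
  push_cast at this ⊢
  linarith

lemma log_step_lower (n : ℕ) (hn : 1 ≤ n) :
    1 / ((n : ℝ) + 1) ≤ Real.log (n + 1) - Real.log n := by
  have hn0 : (0:ℝ) < n := by exact_mod_cast hn
  have h := Real.log_le_sub_one_of_pos (x := (n:ℝ)/((n:ℝ)+1)) (by positivity)
  rw [Real.log_div (by positivity) (by positivity)] at h
  have h2 : (n:ℝ)/((n:ℝ)+1) - 1 = -(1/((n:ℝ)+1)) := by field_simp; ring
  linarith

lemma harmonic_ge_log (M : ℕ) :
    Real.log (M + 1) ≤ ∑ j ∈ Finset.Icc 1 M, (1:ℝ)/j := by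
  induction M with
  | zero => simp
  | succ n ih =>
    rw [Finset.sum_Icc_succ_top (by omega)]
    have h := log_step' n
    push_cast
    push_cast at ih
    linarith

lemma tail_le_log (K : ℕ) (hK : 1 ≤ K) : ∀ N, K ≤ N →
    ∑ j ∈ Finset.Ioc K N, (1:ℝ)/j ≤ Real.log N - Real.log K := by
  intro N
  induction N with
  | zero => intro h; interval_cases K <;> simp
  | succ n ih =>
    intro h
    rcases Nat.lt_or_ge K (n+1) with h1 | h1
    · have hKn : K ≤ n := by omega
      rw [Finset.sum_Ioc_succ_top (by omega)]
      have h2 := log_step_lower n (by omega)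
      have h3 := ih hKn
      push_cast at h2 ⊢
      linarith
    · have : K = n + 1 := by omega
      subst this
      simp

lemma block_sum (d : ℕ) (hd : 1 ≤ d) (K : ℕ) :
    ∑ j ∈ Finset.Ioc 0 (K*d), (1:ℝ)/((⌈(j:ℝ)/d⌉₊ : ℝ) * d)
      = ∑ i ∈ Finset.Ioc 0 K, (1:ℝ)/i := by
  have hd0 : (0:ℝ) < d := by exact_mod_cast hd
  induction K with
  | zero => simp
  | succ n ih =>
    rw [← Finset.sum_Ioc_consecutive _ (Nat.zero_le (n*d))
        (by nlinarith : n*d ≤ (n+1)*d), ih,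
        ← Finset.sum_Ioc_consecutive _ (Nat.zero_le n) (by omega : n ≤ n+1)]
    congr 1
    have hceil : ∀ j ∈ Finset.Ioc (n*d) ((n+1)*d), (1:ℝ)/((⌈(j:ℝ)/d⌉₊ : ℝ) * d)
        = 1/(((n:ℝ)+1) * d) := by
      intro j hj
      simp only [Finset.mem_Ioc] at hj
      have hc : ⌈(j:ℝ)/d⌉₊ = n + 1 := by
        rw [Nat.ceil_eq_iff (by omega)]
        constructor
        · have : (n:ℝ) * d < j := by exact_mod_cast hj.1
          push_cast
          rw [lt_div_iff₀ hd0]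
          simpa using this
        · have : (j:ℝ) ≤ (n+1) * d := by exact_mod_cast hj.2
          push_cast
          rw [div_le_iff₀ hd0]
          linarith
      rw [hc]; push_cast; ring_nf
    rw [Finset.sum_congr rfl hceil, Finset.sum_const, Nat.card_Ioc]
    have h1 : (n+1)*d - n*d = d := by
      rw [Nat.succ_mul]; omega
    rw [h1, nsmul_eq_mul, Nat.Ioc_succ_singleton, Finset.sum_singleton]
    have hn1 : ((n:ℝ)+1) ≠ 0 := by positivity
    push_cast
    field_simp
theorem embezzling_overlap_bound (d M : ℕ) (hd : 1 ≤ d) (hdM : d ≤ M) (hM : 1 < M)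
    (c : ℝ) (hc : c = ∑ i ∈ Finset.Icc 1 M, (1 : ℝ) / i) :
    ∑ j ∈ Finset.Icc 1 M,
        (1 / Real.sqrt ((⌈(j : ℝ) / d⌉₊ : ℝ) * d * c)) / Real.sqrt (j * c)
      ≥ (Real.log M - Real.log d) / Real.log M := by
  have hd0 : (0:ℝ) < d := by exact_mod_cast hd
  have hM1 : (1:ℝ) < M := by exact_mod_cast hM
  have hlogM : 0 < Real.log M := Real.log_pos hM1
  have hlogd : 0 ≤ Real.log d := Real.log_nonneg (by exact_mod_cast hd)
  -- c ≥ log M and c > 0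
  have hcM : Real.log M ≤ c := by
    have h1 := harmonic_ge_log M
    have h2 : Real.log M ≤ Real.log (M + 1) := by
      apply Real.log_le_log (by positivity); linarith
    rw [hc]; linarith
  have hc0 : 0 < c := lt_of_lt_of_le hlogM hcM
  -- the key intermediate sum
  set S := ∑ j ∈ Finset.Icc 1 M, (1:ℝ)/((⌈(j:ℝ)/d⌉₊ : ℝ) * d) with hS
  -- step 1: S ≥ c - log d
  set K := M / d + 1 with hK
  have hK1 : 1 ≤ K := Nat.le_add_left 1 _
  have hMKd : M ≤ K * d := by
    have h1 := Nat.div_add_mod M d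
    have h2 : M % d < d := Nat.mod_lt _ (by omega)
    calc M = d * (M/d) + M % d := h1.symm
      _ ≤ d * (M/d) + d := Nat.add_le_add_left h2.le _
      _ = (M/d + 1) * d := by ring
  have hKKd : K ≤ K * d := Nat.le_mul_of_pos_right K (by omega)
  have hIcc : ∀ N : ℕ, Finset.Icc 1 N = Finset.Ioc 0 N := by
    intro N; rw [← Finset.Icc_add_one_left_eq_Ioc]; rfl
  have hterm_nonneg : ∀ j : ℕ, 1 ≤ j →
      (1:ℝ)/((⌈(j:ℝ)/d⌉₊ : ℝ) * d) ≤ 1/(j:ℝ) ∧ (j:ℝ) ≤ (⌈(j:ℝ)/d⌉₊ : ℝ) * d := by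
    intro j hj
    have hj0 : (0:ℝ) < j := by exact_mod_cast hj
    have hle : (j:ℝ) ≤ (⌈(j:ℝ)/d⌉₊ : ℝ) * d := by
      have := Nat.le_ceil ((j:ℝ)/d)
      calc (j:ℝ) = (j:ℝ)/d * d := by field_simp
        _ ≤ (⌈(j:ℝ)/d⌉₊ : ℝ) * d := by
            apply mul_le_mul_of_nonneg_right this (le_of_lt hd0)
    exact ⟨one_div_le_one_div_of_le hj0 hle, hle⟩
  have step1 : c - Real.log d ≤ S := by
    have hsum_le : ∑ j ∈ Finset.Icc 1 M, ((1:ℝ)/j - 1/((⌈(j:ℝ)/d⌉₊ : ℝ) * d))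
        ≤ ∑ j ∈ Finset.Icc 1 (K*d), ((1:ℝ)/j - 1/((⌈(j:ℝ)/d⌉₊ : ℝ) * d)) := by
      apply Finset.sum_le_sum_of_subset_of_nonneg
      · exact Finset.Icc_subset_Icc_right hMKd
      · intro j hj _
        rw [Finset.mem_Icc] at hj
        have := (hterm_nonneg j hj.1).1
        linarith
    have hblock := block_sum d hd K
    have htail := tail_le_log K hK1 (K*d) hKKd
    have hsplit : ∑ j ∈ Finset.Ioc 0 K, (1:ℝ)/j + ∑ j ∈ Finset.Ioc K (K*d), (1:ℝ)/j
        = ∑ j ∈ Finset.Ioc 0 (K*d), (1:ℝ)/j :=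
      Finset.sum_Ioc_consecutive _ (Nat.zero_le K) hKKd
    have hlogKd : Real.log ((K*d : ℕ) : ℝ) - Real.log K = Real.log d := by
      push_cast
      rw [Real.log_mul (by positivity) (by positivity)]
      ring
    rw [hlogKd] at htail
    have heq : ∑ j ∈ Finset.Icc 1 (K*d), ((1:ℝ)/j - 1/((⌈(j:ℝ)/d⌉₊ : ℝ) * d))
        = ∑ j ∈ Finset.Ioc K (K*d), (1:ℝ)/j := by
      rw [Finset.sum_sub_distrib, hIcc, hblock, ← hsplit]
      ring
    have hsub : ∑ j ∈ Finset.Icc 1 M, ((1:ℝ)/j - 1/((⌈(j:ℝ)/d⌉₊ : ℝ) * d))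
        = c - S := by
      rw [Finset.sum_sub_distrib, hc, hS]
    rw [hsub, heq] at hsum_le
    linarith
  -- step 2: termwise bound
  have step2 : S / c ≤ ∑ j ∈ Finset.Icc 1 M,
      (1 / Real.sqrt ((⌈(j : ℝ) / d⌉₊ : ℝ) * d * c)) / Real.sqrt (j * c) := by
    rw [hS, Finset.sum_div]
    apply Finset.sum_le_sum
    intro j hj
    rw [Finset.mem_Icc] at hj
    have hj0 : (0:ℝ) < j := by exact_mod_cast hj.1
    obtain ⟨-, hle⟩ := hterm_nonneg j hj.1
    have ha0 : (0:ℝ) < (⌈(j:ℝ)/d⌉₊ : ℝ) * d := lt_of_lt_of_le hj0 hle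
    have hac : (0:ℝ) < (⌈(j:ℝ)/d⌉₊ : ℝ) * d * c := by positivity
    have hbc : (0:ℝ) < (j:ℝ) * c := by positivity
    have hsb : Real.sqrt ((j:ℝ)*c) ≤ Real.sqrt ((⌈(j:ℝ)/d⌉₊ : ℝ) * d * c) := by
      apply Real.sqrt_le_sqrt
      exact mul_le_mul_of_nonneg_right hle (le_of_lt hc0)
    have hsq : Real.sqrt ((⌈(j:ℝ)/d⌉₊ : ℝ) * d * c) * Real.sqrt ((⌈(j:ℝ)/d⌉₊ : ℝ) * d * c)
        = (⌈(j:ℝ)/d⌉₊ : ℝ) * d * c := Real.mul_self_sqrt (le_of_lt hac)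
    have hsa0 : 0 < Real.sqrt ((⌈(j:ℝ)/d⌉₊ : ℝ) * d * c) := Real.sqrt_pos.mpr hac
    have hsb0 : 0 < Real.sqrt ((j:ℝ)*c) := Real.sqrt_pos.mpr hbc
    rw [div_div, div_div]
    apply one_div_le_one_div_of_le
    · positivity
    · calc Real.sqrt ((⌈(j:ℝ)/d⌉₊ : ℝ) * d * c) * Real.sqrt ((j:ℝ)*c)
          ≤ Real.sqrt ((⌈(j:ℝ)/d⌉₊ : ℝ) * d * c) * Real.sqrt ((⌈(j:ℝ)/d⌉₊ : ℝ) * d * c) :=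
            mul_le_mul_of_nonneg_left hsb (le_of_lt hsa0)
        _ = (⌈(j:ℝ)/d⌉₊ : ℝ) * d * c := hsq
  -- conclude
  have final : (Real.log M - Real.log d) / Real.log M ≤ S / c := by
    have h1 : (Real.log M - Real.log d) / Real.log M = 1 - Real.log d / Real.log M := by
      field_simp
    have h2 : Real.log d / c ≤ Real.log d / Real.log M :=
      div_le_div_of_nonneg_left hlogd hlogM hcM
    have h3 : (c - Real.log d)/c ≤ S / c := by gcongr
    have h4 : (c - Real.log d)/c = 1 - Real.log d / c := by field_simp
    linarith [h3, h2, h1.ge, h4.le]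
  exact le_trans final step2
end
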